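/- On the elliptic curve E over Q with coefficients (a1,a2,a3,a4,a6) = (282887999996745, -1871148179781457712818452480, -529325366275926422138597740307015937177600, 0, 0), the point (0,0) is a rational point of order exactly 4. -/

import Mathlib

def E : WeierstrassCurve.Affine ℚ :=
  ⟨282887999996745, -1871148179781457712818452480,
    -529325366275926422138597740307015937177600, 0, 0⟩

open WeierstrassCurve.Affine

lemma hP : E.Nonsingular 0 0 := by
  rw [nonsingular_iff, equation_iff]
  norm_num [E]

lemma hy0 : (0 : ℚ) ≠ E.negY 0 0 := by
  norm_num [negY, E]

lemma key : E.addY 0 0 0 (E.slope 0 0 0 0) =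
    E.negY (E.addX 0 0 (E.slope 0 0 0 0)) (E.addY 0 0 0 (E.slope 0 0 0 0)) := by
  rw [slope_of_Y_ne rfl hy0.symm.symm]
  norm_num [negY, addY, addX, negAddY, E]

/-- On the first rank-13 record curve with torsion `ℤ/4ℤ`, the point `(0,0)` has order
exactly 4. -/
theorem point_order_four :
    ∃ h : E.Nonsingular 0 0, addOrderOf (WeierstrassCurve.Affine.Point.some 0 0 h) = 4 := by
  refine ⟨hP, ?_⟩
  set P : E.Point := Point.some 0 0 hP with hPdef
  have h2 : P + P = Point.some _ _ (nonsingular_add hP hP fun hxy => hy0 hxy.right) :=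
    Point.add_of_Y_ne hy0
  have h4 : (P + P) + (P + P) = 0 := by
    rw [h2]
    exact Point.add_self_of_Y_eq key
  have : addOrderOf P = 2 ^ (1 + 1) := by
    refine addOrderOf_eq_prime_pow ?_ ?_
    · rw [pow_one, two_nsmul, h2]
      exact Point.some_ne_zero _
    · rw [show (2 : ℕ) ^ (1 + 1) = 2 * 2 by norm_num, mul_nsmul, two_nsmul, two_nsmul, h4]
  rw [this]; norm_num
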